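/- Worst-case expected return over the Wasserstein ball: Let s₁, …, s_N ∈ ℝⁿ with empirical measure Q_N and sample mean s̄, let w ∈ ℝⁿ with w ≠ 0, and let δ > 0. Then inf{ E^Q[w·S] : Q a Borel probability measure on ℝⁿ with D_c(Q, Q_N) ≤ δ } = w·s̄ − √δ·‖w‖₂. Consequently, for any α₀ ∈ ℝ, the constraint min_{Q ∈ U_δ(Q_N)} E^Q[w·S] ≥ α₀ holds if and only if E^{Q_N}[w·S] ≥ α₀ + √δ·‖w‖₂. -/

import Mathlib

open MeasureTheory
open scoped ENNReal BigOperators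

/-- Euclidean dot product on `Fin n → ℝ`. -/
noncomputable def eDot {n : ℕ} (a b : Fin n → ℝ) : ℝ := ∑ i, a i * b i

/-- Transport cost of a coupling `π` for the quadratic cost `c(u,v) = ‖u − v‖₂²`. -/
noncomputable def transportCost {n : ℕ}
    (π : Measure ((Fin n → ℝ) × (Fin n → ℝ))) : ℝ≥0∞ :=
  ∫⁻ p, ENNReal.ofReal (∑ i, (p.1 i - p.2 i) ^ 2) ∂π

/-- Optimal transport cost `D_c(Q, Q')` with quadratic cost `c(u,v) = ‖u − v‖₂²`. -/
noncomputable def otCost {n : ℕ} (Q Q' : Measure (Fin n → ℝ)) : ℝ≥0∞ :=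
  sInf { r | ∃ π : Measure ((Fin n → ℝ) × (Fin n → ℝ)),
      IsProbabilityMeasure π ∧ π.map Prod.fst = Q ∧ π.map Prod.snd = Q' ∧
      r = transportCost π }

/-- Empirical measure `Q_N = (1/N)·Σᵢ δ_{sᵢ}` of the sample points `s₁, …, s_N`. -/
noncomputable def empiricalMeasure {n N : ℕ} (s : Fin N → (Fin n → ℝ)) :
    Measure (Fin n → ℝ) :=
  (N : ℝ≥0∞)⁻¹ • ∑ i, Measure.dirac (s i)

section Aux

variable {n N : ℕ}

lemma measurable_eDot (w : Fin n → ℝ) : Measurable fun x : Fin n → ℝ => eDot w x := by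
  unfold eDot
  exact Finset.measurable_sum _ fun i _ => (measurable_pi_apply i).const_mul _

lemma prob_mix {α : Type*} [MeasurableSpace α] (hN : 0 < N) (a : Fin N → α) :
    IsProbabilityMeasure ((N : ℝ≥0∞)⁻¹ • ∑ i, Measure.dirac (a i)) := by
  constructor
  rw [Measure.smul_apply, Measure.finset_sum_apply]
  simp only [measure_univ, Finset.sum_const, Finset.card_univ, Fintype.card_fin, nsmul_eq_mul,
    mul_one, smul_eq_mul]
  exact ENNReal.inv_mul_cancel (by exact_mod_cast hN.ne') (by simp)

lemma integrable_dirac'' {α : Type*} [MeasurableSpace α] [MeasurableSingletonClass α]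
    {f : α → ℝ} (hf : Measurable f) (a : α) : Integrable f (Measure.dirac a) := by
  refine ⟨hf.aestronglyMeasurable, ?_⟩
  rw [HasFiniteIntegral, lintegral_dirac]
  exact ENNReal.coe_lt_top

lemma integrable_mix (hN : 0 < N) {f : (Fin n → ℝ) → ℝ} (hf : Measurable f)
    (a : Fin N → (Fin n → ℝ)) :
    Integrable f ((N : ℝ≥0∞)⁻¹ • ∑ i, Measure.dirac (a i)) := by
  refine (integrable_smul_measure ?_ ?_).2 ?_
  · simp
  · simp [hN.ne']
  · exact (integrable_finset_sum_measure).2 fun i _ => integrable_dirac'' hf (a i)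

lemma integral_mix (hN : 0 < N) {f : (Fin n → ℝ) → ℝ} (hf : Measurable f)
    (a : Fin N → (Fin n → ℝ)) :
    ∫ x, f x ∂((N : ℝ≥0∞)⁻¹ • ∑ i, Measure.dirac (a i)) = (N : ℝ)⁻¹ * ∑ i, f (a i) := by
  rw [integral_smul_measure, integral_finset_sum_measure
    (fun i _ => integrable_dirac'' hf (a i))]
  simp only [integral_dirac]
  rw [smul_eq_mul]
  congr 1
  rw [ENNReal.toReal_inv]
  simp

lemma integral_empirical (hN : 0 < N) {f : (Fin n → ℝ) → ℝ} (hf : Measurable f)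
    (s : Fin N → (Fin n → ℝ)) :
    ∫ x, f x ∂(empiricalMeasure s) = (N : ℝ)⁻¹ * ∑ i, f (s i) :=
  integral_mix hN hf s

lemma eDot_sbar (hN : 0 < N) (s : Fin N → (Fin n → ℝ)) (w : Fin n → ℝ) :
    eDot w (fun j => (N : ℝ)⁻¹ * ∑ i, s i j) = (N : ℝ)⁻¹ * ∑ i, eDot w (s i) := by
  unfold eDot
  simp only [Finset.mul_sum]
  rw [Finset.sum_comm]
  refine Finset.sum_congr rfl fun i _ => Finset.sum_congr rfl fun j _ => by ring

lemma map_mix {α β : Type*} [MeasurableSpace α] [MeasurableSpace β]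
    {f : α → β} (hf : Measurable f) (a : Fin N → α) :
    Measure.map f ((N : ℝ≥0∞)⁻¹ • ∑ i, Measure.dirac (a i))
      = (N : ℝ≥0∞)⁻¹ • ∑ i, Measure.dirac (f (a i)) := by
  rw [Measure.map_smul]
  congr 1
  induction (Finset.univ : Finset (Fin N)) using Finset.induction with
  | empty => simp
  | insert a s h ih =>
      rw [Finset.sum_insert h, Finset.sum_insert h, Measure.map_add _ _ hf,
        Measure.map_dirac' hf, ih]

/-- Key analytic lower bound: for any coupling of `Q` with the empirical measure
whose transport cost is at most `C`, the gap between the empirical mean return and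
`E^Q[w·S]` is at most `‖w‖·√C`. -/
lemma gap_le (hN : 0 < N) (s : Fin N → (Fin n → ℝ)) (w : Fin n → ℝ)
    {Q : Measure (Fin n → ℝ)} (hQ : IsProbabilityMeasure Q)
    (hInt : Integrable (fun x => eDot w x) Q)
    {π : Measure ((Fin n → ℝ) × (Fin n → ℝ))} (hπ : IsProbabilityMeasure π)
    (h1 : π.map Prod.fst = Q) (h2 : π.map Prod.snd = empiricalMeasure s)
    {C : ℝ} (hC : 0 ≤ C) (hcost : transportCost π ≤ ENNReal.ofReal C) :
    eDot w (fun j => (N : ℝ)⁻¹ * ∑ i, s i j) - ∫ x, eDot w x ∂Q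
      ≤ Real.sqrt (∑ i, w i ^ 2) * Real.sqrt C := by
  classical
  set g : (Fin n → ℝ) × (Fin n → ℝ) → ℝ := fun p => ∑ i, (p.1 i - p.2 i) ^ 2 with hg_def
  have hg_meas : Measurable g := by
    apply Finset.measurable_sum
    intro i _
    exact ((measurable_fst.eval.sub measurable_snd.eval)).pow_const 2
  have hg_nonneg : ∀ p, 0 ≤ g p := fun p => Finset.sum_nonneg fun i _ => sq_nonneg _
  -- g is integrable with ∫ g ≤ C
  have hg_int : Integrable g π := by
    refine ⟨hg_meas.aestronglyMeasurable, ?_⟩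
    rw [HasFiniteIntegral]
    calc ∫⁻ p, ‖g p‖₊ ∂π = ∫⁻ p, ENNReal.ofReal (g p) ∂π := by
          apply lintegral_congr
          intro p
          exact Real.enorm_eq_ofReal (hg_nonneg p)
      _ ≤ ENNReal.ofReal C := hcost
      _ < ⊤ := ENNReal.ofReal_lt_top
  have hg_intval : ∫ p, g p ∂π ≤ C := by
    rw [integral_eq_lintegral_of_nonneg_ae (Filter.Eventually.of_forall hg_nonneg)
      hg_meas.aestronglyMeasurable]
    have := hcost
    calc (∫⁻ p, ENNReal.ofReal (g p) ∂π).toReal ≤ (ENNReal.ofReal C).toReal :=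
          ENNReal.toReal_mono ENNReal.ofReal_ne_top hcost
      _ = C := ENNReal.toReal_ofReal hC
  -- coordinate differences
  set d : Fin n → (Fin n → ℝ) × (Fin n → ℝ) → ℝ := fun i p => p.2 i - p.1 i with hd_def
  have hd_meas : ∀ i, Measurable (d i) := fun i => measurable_snd.eval.sub measurable_fst.eval
  have hd2_int : ∀ i, Integrable (fun p => (d i p) ^ 2) π := by
    intro i
    refine hg_int.mono ((hd_meas i).pow_const 2).aestronglyMeasurable ?_
    refine Filter.Eventually.of_forall fun p => ?_
    rw [Real.norm_eq_abs, Real.norm_eq_abs, abs_of_nonneg (sq_nonneg _),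
      abs_of_nonneg (hg_nonneg p)]
    have : (d i p) ^ 2 = (p.1 i - p.2 i) ^ 2 := by unfold d; ring
    rw [this]
    exact Finset.single_le_sum (f := fun j => (p.1 j - p.2 j) ^ 2)
      (fun j _ => sq_nonneg _) (Finset.mem_univ i)
  have hd_int : ∀ i, Integrable (d i) π := by
    intro i
    have hint : Integrable (fun p => 1 + (d i p) ^ 2) π :=
      (integrable_const 1).add (hd2_int i)
    refine hint.mono (hd_meas i).aestronglyMeasurable ?_
    refine Filter.Eventually.of_forall fun p => ?_
    rw [Real.norm_eq_abs, Real.norm_eq_abs]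
    have h1 : |d i p| ≤ 1 + (d i p) ^ 2 := by nlinarith [abs_nonneg (d i p), sq_abs (d i p)]
    have h2 : (0 : ℝ) ≤ 1 + (d i p) ^ 2 := by positivity
    rw [abs_of_nonneg h2]
    exact h1
  -- second moments dominate squared means
  set m : Fin n → ℝ := fun i => ∫ p, d i p ∂π with hm_def
  have hm_sq : ∀ i, (m i) ^ 2 ≤ ∫ p, (d i p) ^ 2 ∂π := by
    intro i
    have hexp : (fun p => (d i p - m i) ^ 2)
        = fun p => ((d i p) ^ 2 - (2 * m i) * d i p) + (m i) ^ 2 := by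
      ext p; ring
    have hint1 : Integrable (fun p => (d i p) ^ 2 - (2 * m i) * d i p) π :=
      (hd2_int i).sub ((hd_int i).const_mul _)
    have hval : ∫ p, (d i p - m i) ^ 2 ∂π
        = (∫ p, (d i p) ^ 2 ∂π - (2 * m i) * m i) + (m i) ^ 2 := by
      rw [hexp, integral_add hint1 (integrable_const _),
        integral_sub (hd2_int i) ((hd_int i).const_mul _), integral_const_mul]
      have hmi : ∫ p, d i p ∂π = m i := rfl
      rw [hmi]
      simp [measure_univ]
    have hnn : 0 ≤ ∫ p, (d i p - m i) ^ 2 ∂π :=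
      integral_nonneg fun p => sq_nonneg _
    nlinarith [hnn, hval]
  -- sum of second moments is ∫ g
  have hsum_m : ∑ i, (m i) ^ 2 ≤ C := by
    have : ∑ i, ∫ p, (d i p) ^ 2 ∂π = ∫ p, g p ∂π := by
      rw [← integral_finset_sum _ (fun i _ => hd2_int i)]
      apply integral_congr_ae
      refine Filter.Eventually.of_forall fun p => ?_
      exact Finset.sum_congr rfl fun i _ => by ring
    calc ∑ i, (m i) ^ 2 ≤ ∑ i, ∫ p, (d i p) ^ 2 ∂π :=
          Finset.sum_le_sum fun i _ => hm_sq i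
      _ = ∫ p, g p ∂π := this
      _ ≤ C := hg_intval
  -- the gap equals ∑ i, w i * m i
  have hsnd_int : Integrable (fun p : (Fin n → ℝ) × (Fin n → ℝ) => eDot w p.2) π := by
    have := (integrable_map_measure (μ := π) (f := Prod.snd) (g := fun x => eDot w x)
      ((measurable_eDot w).aestronglyMeasurable) measurable_snd.aemeasurable)
    rw [h2] at this
    exact this.1 (integrable_mix hN (measurable_eDot w) s)
  have hfst_int : Integrable (fun p : (Fin n → ℝ) × (Fin n → ℝ) => eDot w p.1) π := by
    have := (integrable_map_measure (μ := π) (f := Prod.fst) (g := fun x => eDot w x)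
      ((measurable_eDot w).aestronglyMeasurable) measurable_fst.aemeasurable)
    rw [h1] at this
    exact this.1 hInt
  have hsnd_val : ∫ p, eDot w p.2 ∂π = (N : ℝ)⁻¹ * ∑ i, eDot w (s i) := by
    have := integral_map (μ := π) (φ := Prod.snd) (f := fun x => eDot w x)
      measurable_snd.aemeasurable (by rw [h2]; exact (measurable_eDot w).aestronglyMeasurable)
    rw [h2, integral_empirical hN (measurable_eDot w) s] at this
    exact this.symm
  have hfst_val : ∫ p, eDot w p.1 ∂π = ∫ x, eDot w x ∂Q := by
    have := integral_map (μ := π) (φ := Prod.fst) (f := fun x => eDot w x)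
      measurable_fst.aemeasurable (by rw [h1]; exact (measurable_eDot w).aestronglyMeasurable)
    rw [h1] at this
    exact this.symm
  have hgap : eDot w (fun j => (N : ℝ)⁻¹ * ∑ i, s i j) - ∫ x, eDot w x ∂Q
      = ∑ i, w i * m i := by
    have hpt : (fun p : (Fin n → ℝ) × (Fin n → ℝ) => eDot w p.2 - eDot w p.1)
        = fun p => ∑ i, w i * d i p := by
      ext p
      unfold eDot
      unfold d
      rw [← Finset.sum_sub_distrib]
      congr 1; ext i; ring
    have : ∫ p, (eDot w p.2 - eDot w p.1) ∂π = ∑ i, w i * m i := by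
      rw [hpt, integral_finset_sum _ (fun i _ => (hd_int i).const_mul _)]
      exact Finset.sum_congr rfl fun i _ => integral_const_mul _ _
    rw [integral_sub hsnd_int hfst_int, hsnd_val, hfst_val] at this
    rw [eDot_sbar hN s w, this]
  rw [hgap]
  calc ∑ i, w i * m i ≤ Real.sqrt (∑ i, w i ^ 2) * Real.sqrt (∑ i, m i ^ 2) :=
        Real.sum_mul_le_sqrt_mul_sqrt _ _ _
    _ ≤ Real.sqrt (∑ i, w i ^ 2) * Real.sqrt C := by
        apply mul_le_mul_of_nonneg_left (Real.sqrt_le_sqrt hsum_m) (Real.sqrt_nonneg _)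

end Aux

/-- **Worst-case expected return over the Wasserstein ball.**
For sample points `s₁, …, s_N` with empirical measure `Q_N` and sample mean
`s̄`, `w ≠ 0` and `δ > 0`,
`inf{ E^Q[w·S] : D_c(Q, Q_N) ≤ δ } = w·s̄ − √δ·‖w‖₂`; consequently, for any
`α₀`, the constraint `min_{Q ∈ U_δ(Q_N)} E^Q[w·S] ≥ α₀` holds if and only if
`E^{Q_N}[w·S] = w·s̄ ≥ α₀ + √δ·‖w‖₂`. -/
theorem stmt_15 {n N : ℕ} (hN : 0 < N) (s : Fin N → (Fin n → ℝ))
    (w : Fin n → ℝ) (hw : w ≠ 0) (δ : ℝ) (hδ : 0 < δ) :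
    let sbar : Fin n → ℝ := fun j => (N : ℝ)⁻¹ * ∑ i, s i j
    let enorm : ℝ := Real.sqrt (∑ i, w i ^ 2)
    let worst : ℝ := sInf { v | ∃ Q : Measure (Fin n → ℝ),
      IsProbabilityMeasure Q ∧ otCost Q (empiricalMeasure s) ≤ ENNReal.ofReal δ ∧
      Integrable (fun x => eDot w x) Q ∧ v = ∫ x, eDot w x ∂Q }
    worst = eDot w sbar - Real.sqrt δ * enorm ∧
      ∀ α₀ : ℝ, (α₀ ≤ worst ↔ α₀ + Real.sqrt δ * enorm ≤ eDot w sbar) := by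
  intro sbar enorm worst
  classical
  -- positivity of the norm
  have hsum_pos : 0 < ∑ i, w i ^ 2 := by
    have hex : ∃ i, w i ≠ 0 := by
      by_contra h
      push_neg at h
      exact hw (funext h)
    obtain ⟨i, hi⟩ := hex
    refine Finset.sum_pos' (fun j _ => sq_nonneg _) ⟨i, Finset.mem_univ i, ?_⟩
    positivity
  have hE_pos : 0 < enorm := Real.sqrt_pos.2 hsum_pos
  set a : ℝ := eDot w sbar - Real.sqrt δ * enorm with ha_def
  set S : Set ℝ := { v | ∃ Q : Measure (Fin n → ℝ),
      IsProbabilityMeasure Q ∧ otCost Q (empiricalMeasure s) ≤ ENNReal.ofReal δ ∧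
      Integrable (fun x => eDot w x) Q ∧ v = ∫ x, eDot w x ∂Q } with hS_def
  -- LOWER BOUND: a is a lower bound of S
  have hlow : ∀ v ∈ S, a ≤ v := by
    rintro v ⟨Q, hQprob, hQcost, hQint, rfl⟩
    set v := ∫ x, eDot w x ∂Q
    by_cases hcase : eDot w sbar - v ≤ 0
    · have : 0 ≤ Real.sqrt δ * enorm := by positivity
      rw [ha_def]; linarith
    push_neg at hcase
    set B : ℝ := ((eDot w sbar - v) / enorm) ^ 2 with hB_def
    have hB_nonneg : 0 ≤ B := sq_nonneg _
    have hfrac_pos : 0 < (eDot w sbar - v) / enorm := div_pos hcase hE_pos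
    -- ofReal B ≤ otCost
    have hkey : ENNReal.ofReal B ≤ otCost Q (empiricalMeasure s) := by
      refine le_sInf ?_
      rintro r ⟨π, hπprob, hπ1, hπ2, rfl⟩
      by_cases htop : transportCost π = ⊤
      · rw [htop]; exact le_top
      · set C : ℝ := (transportCost π).toReal with hC_def
        have hC_nonneg : 0 ≤ C := ENNReal.toReal_nonneg
        have hcost : transportCost π ≤ ENNReal.ofReal C := by
          rw [hC_def, ENNReal.ofReal_toReal htop]
        have hgap := gap_le hN s w hQprob hQint hπprob hπ1 hπ2 hC_nonneg hcost
        -- eDot w sbar - v ≤ enorm * √C, so B ≤ C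
        have h1 : (eDot w sbar - v) / enorm ≤ Real.sqrt C := by
          rw [div_le_iff₀ hE_pos]
          calc eDot w sbar - v ≤ enorm * Real.sqrt C := hgap
            _ = Real.sqrt C * enorm := mul_comm _ _
        have hBC : B ≤ C := by
          rw [hB_def]
          calc ((eDot w sbar - v) / enorm) ^ 2 ≤ (Real.sqrt C) ^ 2 := by
                apply pow_le_pow_left₀ hfrac_pos.le h1
            _ = C := Real.sq_sqrt hC_nonneg
        calc ENNReal.ofReal B ≤ ENNReal.ofReal C := ENNReal.ofReal_le_ofReal hBC
          _ = transportCost π := by rw [hC_def]; exact ENNReal.ofReal_toReal htop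
    have hBδ : B ≤ δ := by
      have := hkey.trans hQcost
      exact (ENNReal.ofReal_le_ofReal_iff hδ.le).1 this
    have hfinal : (eDot w sbar - v) / enorm ≤ Real.sqrt δ := by
      rw [show Real.sqrt δ = Real.sqrt δ from rfl]
      have := (Real.le_sqrt hfrac_pos.le hδ.le).2 (by rw [← hB_def]; exact hBδ)
      exact this
    rw [ha_def]
    have : eDot w sbar - v ≤ Real.sqrt δ * enorm := by
      rw [← div_le_iff₀ hE_pos] at *
      linarith [hfinal]
    linarith
  -- UPPER BOUND: a ∈ S via the shifted empirical measure
  have hmem : a ∈ S := by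
    set t : Fin n → ℝ := fun i => -(Real.sqrt δ / enorm) * w i with ht_def
    have ht_sq : ∑ i, t i ^ 2 = δ := by
      have : ∀ i, t i ^ 2 = (δ / (∑ i, w i ^ 2)) * w i ^ 2 := by
        intro i
        unfold t enorm
        rw [mul_pow, neg_pow, div_pow, Real.sq_sqrt hδ.le, Real.sq_sqrt hsum_pos.le]
        ring
      rw [Finset.sum_congr rfl (fun i _ => this i), ← Finset.mul_sum]
      field_simp
    have ht_dot : eDot w t = -(Real.sqrt δ * enorm) := by
      unfold eDot
      have : ∀ i, w i * t i = -(Real.sqrt δ / enorm) * w i ^ 2 := by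
        intro i; unfold t; ring
      rw [Finset.sum_congr rfl (fun i _ => this i), ← Finset.mul_sum]
      have hEsq : (∑ i, w i ^ 2) = enorm ^ 2 := (Real.sq_sqrt hsum_pos.le).symm
      rw [hEsq]
      field_simp
    set Q : Measure (Fin n → ℝ) := empiricalMeasure (fun i => fun j => s i j + t j)
      with hQ_def
    set π : Measure ((Fin n → ℝ) × (Fin n → ℝ)) :=
      (N : ℝ≥0∞)⁻¹ • ∑ i, Measure.dirac ((fun j => s i j + t j), s i) with hπ_def
    have hπprob : IsProbabilityMeasure π := prob_mix hN _
    have hQprob : IsProbabilityMeasure Q := prob_mix hN _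
    have hmap1 : π.map Prod.fst = Q := by
      rw [hπ_def, map_mix measurable_fst]
      rfl
    have hmap2 : π.map Prod.snd = empiricalMeasure s := by
      rw [hπ_def, map_mix measurable_snd]
      rfl
    have hcostπ : transportCost π = ENNReal.ofReal δ := by
      unfold transportCost
      rw [hπ_def, lintegral_smul_measure, lintegral_finset_sum_measure]
      have : ∀ i : Fin N, (∫⁻ p : (Fin n → ℝ) × (Fin n → ℝ),
          ENNReal.ofReal (∑ j, (p.1 j - p.2 j) ^ 2)
          ∂Measure.dirac ((fun j => s i j + t j), s i)) = ENNReal.ofReal δ := by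
        intro i
        rw [lintegral_dirac]
        congr 1
        simpa using ht_sq
      rw [Finset.sum_congr rfl (fun i _ => this i)]
      simp only [Finset.sum_const, Finset.card_univ, Fintype.card_fin, nsmul_eq_mul]
      rw [smul_eq_mul, ← mul_assoc, ENNReal.inv_mul_cancel (by exact_mod_cast hN.ne') (by simp), one_mul]
    have hQcost : otCost Q (empiricalMeasure s) ≤ ENNReal.ofReal δ := by
      apply sInf_le
      exact ⟨π, hπprob, hmap1, hmap2, hcostπ.symm⟩
    have hQint : Integrable (fun x => eDot w x) Q :=
      integrable_mix hN (measurable_eDot w) _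
    have hQval : ∫ x, eDot w x ∂Q = a := by
      rw [hQ_def]
      rw [integral_empirical hN (measurable_eDot w)]
      have : ∀ i : Fin N, eDot w (fun j => s i j + t j) = eDot w (s i) + eDot w t := by
        intro i
        unfold eDot
        rw [← Finset.sum_add_distrib]
        congr 1; ext j; ring
      rw [Finset.sum_congr rfl (fun i _ => this i), Finset.sum_add_distrib]
      rw [mul_add]
      have hN' : (N : ℝ) ≠ 0 := by exact_mod_cast hN.ne'
      rw [Finset.sum_const, Finset.card_univ, Fintype.card_fin, nsmul_eq_mul]
      rw [ha_def, ht_dot]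
      have hsb : eDot w sbar = (N : ℝ)⁻¹ * ∑ i, eDot w (s i) := eDot_sbar hN s w
      rw [hsb]
      field_simp
      ring
    exact ⟨Q, hQprob, hQcost, hQint, hQval.symm⟩
  -- conclude
  have hne : S.Nonempty := ⟨a, hmem⟩
  have hbdd : BddBelow S := ⟨a, hlow⟩
  have hworst : worst = a := le_antisymm (csInf_le hbdd hmem) (le_csInf hne hlow)
  refine ⟨hworst, fun α₀ => ?_⟩
  rw [hworst, ha_def]
  constructor <;> intro h <;> linarith
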